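/- There is no matrix in GL(3,ℤ) (3×3 integer matrix with determinant ±1) whose norm (the sum of the absolute values of all nine entries) is at most 4 and whose characteristic polynomial is irreducible over ℚ and has three distinct real roots. -/

import Mathlib

open Matrix Polynomial

def firsts (r : ℕ) : List ℤ := (List.range (2*r+1)).map (fun k : ℕ => (k : ℤ) - (r : ℤ))

lemma mem_firsts {a : ℤ} {r : ℕ} (h : a.natAbs ≤ r) : a ∈ firsts r := by
  have h1 : |a| ≤ (r : ℤ) := by rw [Int.abs_eq_natAbs]; exact_mod_cast h
  have h2 := neg_le_of_abs_le h1
  have h3 := le_of_abs_le h1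
  unfold firsts
  rw [List.mem_map]
  refine ⟨(a + r).toNat, ?_, ?_⟩
  · rw [List.mem_range]; omega
  · show ((a + r).toNat : ℤ) - r = a
    omega

def chk : List ℤ → Bool
  | [a,b,c,d,e,f,g,h,i] =>
    let D := a*e*i - a*f*h - b*d*i + b*f*g + c*d*h - c*e*g
    let e1 := (1-a)*((1-e)*(1-i)) - (1-a)*((-f)*(-h)) - (-b)*((-d)*(1-i)) +
      (-b)*((-f)*(-g)) + (-c)*((-d)*(-h)) - (-c)*((1-e)*(-g))
    let em1 := (-1-a)*((-1-e)*(-1-i)) - (-1-a)*((-f)*(-h)) - (-b)*((-d)*(-1-i)) +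
      (-b)*((-f)*(-g)) + (-c)*((-d)*(-h)) - (-c)*((-1-e)*(-g))
    let S1 := -(e1 + em1 + 2*D)
    let S2 := e1 - em1 - 2
    !(D == 1 || D == -1) || decide (S1*S1*(S2*S2) - 8*(S2*(S2*S2)) - 8*(S1*(S1*S1))*D
       + 72*(S1*(S2*D)) - 432*(D*D) ≤ 0) || e1 == 0 || em1 == 0
  | _ => true

def sweep : ℕ → ℕ → List ℤ → Bool
  | 0, _, acc => chk acc
  | n+1, r, acc => (firsts r).all fun a => sweep n (r - a.natAbs) (acc ++ [a])

lemma sweep_sound : ∀ (n r : ℕ) (acc l : List ℤ), sweep n r acc = true →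
    l.length = n → (l.map Int.natAbs).sum ≤ r → chk (acc ++ l) = true := by
  intro n
  induction n with
  | zero =>
    intro r acc l hs hl _
    rw [List.eq_nil_of_length_eq_zero hl, List.append_nil]
    exact hs
  | succ n ih =>
    intro r acc l hs hl hsum
    match l with
    | a :: tl =>
      simp only [List.map_cons, List.sum_cons] at hsum
      simp only [sweep, List.all_eq_true] at hs
      have := ih (r - a.natAbs) (acc ++ [a]) tl (hs a (mem_firsts (by omega)))
        (by simpa using hl) (by omega)
      simpa using this

set_option maxRecDepth 1000000 in
set_option maxHeartbeats 20000000 in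
lemma allchk : sweep 9 4 [] = true := by decide

lemma evA (A : Matrix (Fin 3) (Fin 3) ℤ) (r : ℤ) :
    A.charpoly.eval r =
      (r - A 0 0)*((r - A 1 1)*(r - A 2 2)) - (r - A 0 0)*((-A 1 2)*(-A 2 1))
      - (-A 0 1)*((-A 1 0)*(r - A 2 2)) + (-A 0 1)*((-A 1 2)*(-A 2 0))
      + (-A 0 2)*((-A 1 0)*(-A 2 1)) - (-A 0 2)*((r - A 1 1)*(-A 2 0)) := by
  rw [Matrix.charpoly, Matrix.det_fin_three]
  simp [Matrix.charmatrix_apply, Matrix.diagonal_apply]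
  ring

lemma no_int_root (A : Matrix (Fin 3) (Fin 3) ℤ)
    (hirr : Irreducible (A.charpoly.map (Int.castRingHom ℚ))) (a : ℤ) :
    A.charpoly.eval a ≠ 0 := by
  intro h
  set q := A.charpoly.map (Int.castRingHom ℚ) with hq
  have hdeg : q.natDegree = 3 := by
    rw [hq, (A.charpoly_monic).natDegree_map]
    simp
  have hroot : q.eval ((a : ℤ) : ℚ) = 0 := by
    rw [hq, Polynomial.eval_intCast_map]
    simp only [Int.cast_id, h, map_zero]
  obtain ⟨u, hu⟩ := (Polynomial.dvd_iff_isRoot.mpr hroot)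
  rcases hirr.isUnit_or_isUnit hu with h1 | h2
  · exact Polynomial.not_isUnit_X_sub_C _ h1
  · have h3 : q.natDegree = 1 := by
      rw [hu, Polynomial.natDegree_mul (Polynomial.X_sub_C_ne_zero _) h2.ne_zero,
        Polynomial.natDegree_X_sub_C, Polynomial.natDegree_eq_zero_of_isUnit h2]
    omega

lemma factor3 (P : Polynomial ℝ) (hm : P.Monic) (hdeg : P.natDegree = 3) {x y z : ℝ}
    (hxy : x ≠ y) (hxz : x ≠ z) (hyz : y ≠ z)
    (hx : P.IsRoot x) (hy : P.IsRoot y) (hz : P.IsRoot z) :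
    P = (X - C x) * ((X - C y) * (X - C z)) := by
  obtain ⟨P1, hP1⟩ := Polynomial.dvd_iff_isRoot.mpr hx
  have hy1 : P1.IsRoot y := by
    have h := hy
    rw [hP1] at h
    simp only [IsRoot, eval_mul, eval_sub, eval_X, eval_C] at h ⊢
    rcases mul_eq_zero.mp h with h' | h'
    · exact absurd (by linarith : x = y) hxy
    · exact h'
  obtain ⟨P2, hP2⟩ := Polynomial.dvd_iff_isRoot.mpr hy1
  have hz1 : P2.IsRoot z := by
    have h := hz
    rw [hP1, hP2] at h
    simp only [IsRoot, eval_mul, eval_sub, eval_X, eval_C] at h ⊢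
    rcases mul_eq_zero.mp h with h' | h'
    · exact absurd (by linarith : x = z) hxz
    rcases mul_eq_zero.mp h' with h'' | h''
    · exact absurd (by linarith : y = z) hyz
    · exact h''
  obtain ⟨P3, hP3⟩ := Polynomial.dvd_iff_isRoot.mpr hz1
  have hP : P = ((X - C x) * ((X - C y) * (X - C z))) * P3 := by
    rw [hP1, hP2, hP3]; ring
  have hqm : ((X - C x) * ((X - C y) * (X - C z))).Monic :=
    (monic_X_sub_C x).mul ((monic_X_sub_C y).mul (monic_X_sub_C z))
  have hP3m : P3.Monic := hqm.of_mul_monic_left (hP ▸ hm)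
  have hqdeg : ((X - C x) * ((X - C y) * (X - C z))).natDegree = 3 := by
    rw [(monic_X_sub_C x).natDegree_mul ((monic_X_sub_C y).mul (monic_X_sub_C z)),
      (monic_X_sub_C y).natDegree_mul (monic_X_sub_C z)]
    simp [Polynomial.natDegree_X_sub_C]
  have h30 : P.natDegree = 3 + P3.natDegree := by
    rw [hP, hqm.natDegree_mul hP3m, hqdeg]
  have hP31 : P3 = 1 := Polynomial.eq_one_of_monic_natDegree_zero hP3m (by omega)
  rw [hP, hP31, mul_one]

/-- The norm of an integer matrix: the sum of the absolute values of all entries. -/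
def matNorm (A : Matrix (Fin 3) (Fin 3) ℤ) : ℤ := ∑ i, ∑ j, |A i j|

/-- An integer polynomial has three distinct real roots. -/
def hasThreeDistinctRealRoots (p : Polynomial ℤ) : Prop :=
  ∃ x y z : ℝ, x ≠ y ∧ x ≠ z ∧ y ≠ z ∧
    (p.map (Int.castRingHom ℝ)).IsRoot x ∧
    (p.map (Int.castRingHom ℝ)).IsRoot y ∧
    (p.map (Int.castRingHom ℝ)).IsRoot z

theorem no_hyperbolic_matrix_of_norm_le_four :
    ¬ ∃ A : Matrix (Fin 3) (Fin 3) ℤ,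
      (A.det = 1 ∨ A.det = -1) ∧
      matNorm A ≤ 4 ∧
      Irreducible (A.charpoly.map (Int.castRingHom ℚ)) ∧
      hasThreeDistinctRealRoots A.charpoly := by
  rintro ⟨A, hdet, hnorm, hirr, x, y, z, hxy, hxz, hyz, hx, hy, hz⟩
  -- factor the real charpoly
  have hm : (A.charpoly.map (Int.castRingHom ℝ)).Monic :=
    (A.charpoly_monic).map _
  have hdeg3 : (A.charpoly.map (Int.castRingHom ℝ)).natDegree = 3 := by
    rw [(A.charpoly_monic).natDegree_map]; simp
  have hfact := factor3 _ hm hdeg3 hxy hxz hyz hx hy hz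
  have heval : ∀ u : ℝ, (A.charpoly.map (Int.castRingHom ℝ)).eval u
      = (u - x)*((u - y)*(u - z)) := by
    intro u; rw [hfact]; simp
  have ha : ((A.charpoly.eval 1 : ℤ) : ℝ) = (1-x)*((1-y)*(1-z)) := by
    have h := heval (((1:ℤ) : ℝ))
    rw [Polynomial.eval_intCast_map] at h
    simpa using h
  have hb : ((A.charpoly.eval (-1) : ℤ) : ℝ) = (-1-x)*((-1-y)*(-1-z)) := by
    have h := heval (((-1:ℤ) : ℝ))
    rw [Polynomial.eval_intCast_map] at h
    simpa using h
  have hdet0 : A.charpoly.eval 0 = -A.det := by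
    have h := A.det_eq_sign_charpoly_coeff
    rw [Polynomial.coeff_zero_eq_eval_zero] at h
    simp only [Fintype.card_fin] at h
    norm_num at h
    omega
  have hc : ((A.det : ℤ) : ℝ) = x*(y*z) := by
    have h := heval 0
    rw [← Polynomial.coeff_zero_eq_eval_zero, Polynomial.coeff_map,
      Polynomial.coeff_zero_eq_eval_zero, hdet0] at h
    simp only [map_neg, eq_intCast] at h
    linear_combination -h
  -- enumeration
  have hsum : (([A 0 0, A 0 1, A 0 2, A 1 0, A 1 1, A 1 2,
      A 2 0, A 2 1, A 2 2] : List ℤ).map Int.natAbs).sum ≤ 4 := by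
    have h4 : |A 0 0| + |A 0 1| + |A 0 2| + (|A 1 0| + |A 1 1| + |A 1 2|) +
        (|A 2 0| + |A 2 1| + |A 2 2|) ≤ 4 := by
      have h := hnorm
      simp only [matNorm, Fin.sum_univ_three] at h
      linarith
    simp only [List.map_cons, List.map_nil, List.sum_cons, List.sum_nil]
    zify
    linarith
  have hchk : chk [A 0 0, A 0 1, A 0 2, A 1 0, A 1 1, A 1 2,
      A 2 0, A 2 1, A 2 2] = true :=
    sweep_sound 9 4 [] _ allchk rfl hsum
  simp only [chk, Bool.or_eq_true, Bool.not_eq_true', Bool.or_eq_false_iff,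
    beq_eq_false_iff_ne, ne_eq, decide_eq_true_eq, beq_iff_eq] at hchk
  rcases hchk with ((⟨hD1, hD2⟩ | hineq) | he1) | hem1
  · rw [← Matrix.det_fin_three] at hD1 hD2
    tauto
  · -- the discriminant inequality; derive contradiction with real roots
    rw [← evA A 1, ← evA A (-1), ← Matrix.det_fin_three] at hineq
    set e1 := A.charpoly.eval 1 with he1d
    set em1 := A.charpoly.eval (-1) with hem1d
    set d := A.det with hdd
    set W : ℝ := (x-y)*((y-z)*(z-x)) with hW
    have hWne : W ≠ 0 :=
      mul_ne_zero (sub_ne_zero.mpr hxy)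
        (mul_ne_zero (sub_ne_zero.mpr hyz) (sub_ne_zero.mpr (Ne.symm hxz)))
    have hWpos : 0 < W^2 := by positivity
    have key : 16*W^2 =
        (-(((e1:ℝ)) + (em1:ℝ) + 2*(d:ℝ)))*(-(((e1:ℝ)) + (em1:ℝ) + 2*(d:ℝ)))*
          (((e1:ℝ) - (em1:ℝ) - 2)*((e1:ℝ) - (em1:ℝ) - 2))
        - 8*(((e1:ℝ) - (em1:ℝ) - 2)*(((e1:ℝ) - (em1:ℝ) - 2)*((e1:ℝ) - (em1:ℝ) - 2)))
        - 8*((-(((e1:ℝ)) + (em1:ℝ) + 2*(d:ℝ)))*((-(((e1:ℝ)) + (em1:ℝ) + 2*(d:ℝ)))*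
            (-(((e1:ℝ)) + (em1:ℝ) + 2*(d:ℝ)))))*(d:ℝ)
        + 72*((-(((e1:ℝ)) + (em1:ℝ) + 2*(d:ℝ)))*(((e1:ℝ) - (em1:ℝ) - 2)*(d:ℝ)))
        - 432*((d:ℝ)*(d:ℝ)) := by
      rw [ha, hb, hc, hW]
      ring
    have hineqR : ((-(e1 + em1 + 2*d))*(-(e1 + em1 + 2*d))*((e1 - em1 - 2)*(e1 - em1 - 2))
        - 8*((e1 - em1 - 2)*((e1 - em1 - 2)*(e1 - em1 - 2)))
        - 8*((-(e1 + em1 + 2*d))*((-(e1 + em1 + 2*d))*(-(e1 + em1 + 2*d))))*d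
        + 72*((-(e1 + em1 + 2*d))*((e1 - em1 - 2)*d))
        - 432*(d*d) : ℤ) ≤ 0 := hineq
    have hineqR' : ((-(((e1:ℝ)) + (em1:ℝ) + 2*(d:ℝ)))*(-(((e1:ℝ)) + (em1:ℝ) + 2*(d:ℝ)))*
          (((e1:ℝ) - (em1:ℝ) - 2)*((e1:ℝ) - (em1:ℝ) - 2))
        - 8*(((e1:ℝ) - (em1:ℝ) - 2)*(((e1:ℝ) - (em1:ℝ) - 2)*((e1:ℝ) - (em1:ℝ) - 2)))
        - 8*((-(((e1:ℝ)) + (em1:ℝ) + 2*(d:ℝ)))*((-(((e1:ℝ)) + (em1:ℝ) + 2*(d:ℝ)))*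
            (-(((e1:ℝ)) + (em1:ℝ) + 2*(d:ℝ)))))*(d:ℝ)
        + 72*((-(((e1:ℝ)) + (em1:ℝ) + 2*(d:ℝ)))*(((e1:ℝ) - (em1:ℝ) - 2)*(d:ℝ)))
        - 432*((d:ℝ)*(d:ℝ))) ≤ 0 := by exact_mod_cast hineqR
    nlinarith [key, hineqR', hWpos]
  · rw [← evA A 1] at he1
    exact no_int_root A hirr 1 he1
  · rw [← evA A (-1)] at hem1
    exact no_int_root A hirr (-1) hem1
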